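/- arXiv:1408.4053 — 9 statements merged into one kernel-verified Lean document; each statement's English description precedes it below -/
import Mathlib

section
/- Let ω be a real number, let q ≥ 2 and let A, B be positive integers. Then the A×B real matrix M with entries M(a,b) = sin(ω·(a + c·b)), for a ∈ {0,…,A−1}, b ∈ {0,…,B−1} and any fixed real number c, has matrix rank at most 2. In particular, every TT-unfolding matrix [sin(ω(a + q^s b))]_{a ∈ Fin q^s, b ∈ Fin q^{L−s}} of the q-adically folded trigonometric vector (sin(ω n))_{n=0}^{q^L − 1} has rank at most 2, so the TT-rank of the quantized trigonometric vector is at most 2. -/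
lemma rank_le_two_of_sum {A B : Type*} [Fintype A] [Fintype B] [DecidableEq B]
    (f g : A → ℝ) (u v : B → ℝ) (M : Matrix A B ℝ)
    (h : ∀ a b, M a b = f a * u b + g a * v b) : M.rank ≤ 2 := by
  classical
  set P : Matrix A (Fin 2) ℝ := Matrix.of fun a k => if k = 0 then f a else g a
  set Q : Matrix (Fin 2) B ℝ := Matrix.of fun k b => if k = 0 then u b else v b
  have hM : M = P * Q := by
    ext a b
    simp [Matrix.mul_apply, Fin.sum_univ_two, P, Q, h a b]
  calc M.rank ≤ P.rank := by rw [hM]; exact Matrix.rank_mul_le_left P Q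
    _ ≤ Fintype.card (Fin 2) := Matrix.rank_le_card_width P
    _ = 2 := by simp

/-- The matrix `M(a,b) = sin(ω (a + c b))` has rank at most 2; in particular every
TT-unfolding matrix `[sin(ω (a + q^s b))]` of the `q`-adically folded trigonometric vector
`(sin(ω n))_{n<q^L}` has rank at most 2, so the TT-rank of the quantized trigonometric
vector is at most 2. -/
theorem sin_matrix_rank_le_two :
    (∀ (ω c : ℝ) (A B : ℕ), 0 < A → 0 < B →
      ∀ M : Matrix (Fin A) (Fin B) ℝ,
        (∀ a b, M a b = Real.sin (ω * ((a : ℝ) + c * (b : ℝ)))) → M.rank ≤ 2) ∧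
    (∀ (ω : ℝ) (q L s : ℕ), 2 ≤ q → s ≤ L →
      ∀ U : Matrix (Fin (q ^ s)) (Fin (q ^ (L - s))) ℝ,
        (∀ a b, U a b = Real.sin (ω * ((a : ℝ) + (q : ℝ) ^ s * (b : ℝ)))) → U.rank ≤ 2) := by
  have key : ∀ (ω c : ℝ) (A B : ℕ) (M : Matrix (Fin A) (Fin B) ℝ),
      (∀ a b, M a b = Real.sin (ω * ((a : ℝ) + c * (b : ℝ)))) → M.rank ≤ 2 := by
    intro ω c A B M hM
    refine rank_le_two_of_sum (fun a : Fin A => Real.sin (ω * a)) (fun a : Fin A => Real.cos (ω * a))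
      (fun b : Fin B => Real.cos (ω * (c * b))) (fun b : Fin B => Real.sin (ω * (c * b))) M ?_
    intro a b
    rw [hM a b, mul_add, Real.sin_add]
  exact ⟨fun ω c A B _ _ M hM => key ω c A B M hM,
    fun ω q L s _ _ U hU => key ω ((q : ℝ) ^ s) _ _ U hU⟩
end

section
/- Let d ≥ 2, N ≥ 2 and h > 0. Define the tensor T : (Fin N)^d → ℝ by T(i_1,…,i_d) = Σ_{ℓ=1}^{d} (i_ℓ + 1)·h, i.e. T is obtained by sampling the function f(x) = x_1 + … + x_d at the grid points x_ℓ ∈ {h, 2h, …, Nh}. Then the canonical rank of T is exactly d: T can be written as a sum of d rank-1 tensors, and it cannot be written as a sum of fewer than d rank-1 tensors. -/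
open Finset

/-- Lower bound lemma: any rank-`R` decomposition of the shifted sum tensor
`i ↦ (∑ ℓ, (i ℓ + 1) h) + μ` on `(Fin N)^(d+1)` forces `d + 1 ≤ R`. -/
lemma sum_tensor_rank_lb (N : ℕ) (hN : 2 ≤ N) (h : ℝ) (hh : h ≠ 0) :
    ∀ d R : ℕ, ∀ μ : ℝ, ∀ u : Fin R → Fin (d + 1) → Fin N → ℝ,
      (∀ i : Fin (d + 1) → Fin N,
          (∑ ℓ, ((i ℓ : ℕ) + 1 : ℝ) * h) + μ = ∑ r, ∏ ℓ, u r ℓ (i ℓ)) →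
      d + 1 ≤ R := by
  have z0 : Fin N := ⟨0, by omega⟩
  have z1 : Fin N := ⟨1, by omega⟩
  intro d
  induction d with
  | zero =>
    intro R μ u hu
    by_contra hR
    have hR0 : R = 0 := by omega
    subst hR0
    have h0 := hu (fun _ => ⟨0, by omega⟩)
    have h1 := hu (fun _ => ⟨1, by omega⟩)
    simp at h0 h1
    -- h0 : h + μ = 0 ; h1 : (1+1)*h + μ = 0
    apply hh
    linarith
  | succ d ih =>
    intro R μ u hu
    set P : Fin R → (Fin (d + 1) → Fin N) → ℝ :=
      fun r i' => ∏ ℓ : Fin (d + 1), u r ℓ.castSucc (i' ℓ) with hP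
    have key : ∀ (i' : Fin (d + 1) → Fin N) (j : Fin N),
        (∑ ℓ, ((i' ℓ : ℕ) + 1 : ℝ) * h) + ((j : ℕ) + 1 : ℝ) * h + μ
          = ∑ r, P r i' * u r (Fin.last (d + 1)) j := by
      intro i' j
      have := hu (Fin.snoc i' j)
      rw [Fin.sum_univ_castSucc] at this
      simp only [Fin.snoc_castSucc, Fin.snoc_last] at this
      rw [this]
      apply Finset.sum_congr rfl
      intro r _
      rw [Fin.prod_univ_castSucc]
      simp [hP, Fin.snoc_castSucc, Fin.snoc_last]
    set α : Fin R → ℝ := fun r => u r (Fin.last (d + 1)) ⟨1, by omega⟩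
        - u r (Fin.last (d + 1)) ⟨0, by omega⟩ with hα
    have hdiff : ∀ i', ∑ r, P r i' * α r = h := by
      intro i'
      have h1 := key i' ⟨1, by omega⟩
      have h0 := key i' ⟨0, by omega⟩
      simp only [hα, mul_sub]
      rw [Finset.sum_sub_distrib]
      push_cast at h1 h0
      linarith [h1, h0]
    -- get a term with nonzero α
    have hne : ∑ r, P r (fun _ => ⟨0, by omega⟩) * α r ≠ 0 := by
      rw [hdiff]; exact hh
    obtain ⟨r0, -, hr0⟩ := Finset.exists_ne_zero_of_sum_ne_zero hne
    have hαr0 : α r0 ≠ 0 := right_ne_zero_of_mul hr0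
    set lam : ℝ := u r0 (Fin.last (d + 1)) ⟨0, by omega⟩ / α r0 with hlam
    set c : Fin R → ℝ := fun r => u r (Fin.last (d + 1)) ⟨0, by omega⟩ - lam * α r with hc
    have hc0 : c r0 = 0 := by
      simp only [hc, hlam]
      field_simp
      ring
    have hkey2 : ∀ i', (∑ ℓ, ((i' ℓ : ℕ) + 1 : ℝ) * h) + (h + μ - lam * h)
        = ∑ r, P r i' * c r := by
      intro i'
      have h0 := key i' ⟨0, by omega⟩
      have hd' := hdiff i'
      simp only [hc, mul_sub]
      rw [Finset.sum_sub_distrib]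
      have : ∑ r, P r i' * (lam * α r) = lam * ∑ r, P r i' * α r := by
        rw [Finset.mul_sum]; apply Finset.sum_congr rfl; intro r _; ring
      rw [this, hd']
      push_cast at h0
      linarith [h0]
    -- R must be positive
    rcases R with _ | R'
    · exact absurd (by simpa using (hdiff (fun _ => ⟨0, by omega⟩)).symm) hh
    -- build the smaller decomposition
    set v : Fin R' → Fin (d + 1) → Fin N → ℝ :=
      fun r ℓ x => (if ℓ = 0 then c (r0.succAbove r) else 1)
        * u (r0.succAbove r) ℓ.castSucc x with hv
    have hvprod : ∀ (r : Fin R') (i' : Fin (d + 1) → Fin N),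
        ∏ ℓ, v r ℓ (i' ℓ) = c (r0.succAbove r) * P (r0.succAbove r) i' := by
      intro r i'
      simp only [hv]
      rw [Finset.prod_mul_distrib]
      congr 1
      simp
    have hdec : ∀ i' : Fin (d + 1) → Fin N,
        (∑ ℓ, ((i' ℓ : ℕ) + 1 : ℝ) * h) + (h + μ - lam * h)
          = ∑ r : Fin R', ∏ ℓ, v r ℓ (i' ℓ) := by
      intro i'
      rw [hkey2 i']
      rw [Fin.sum_univ_succAbove (fun r => P r i' * c r) r0, hc0]
      simp only [mul_zero, zero_add]
      apply Finset.sum_congr rfl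
      intro r _
      rw [hvprod]; ring
    have := ih R' (h + μ - lam * h) v hdec
    omega

/-- The tensor obtained by sampling `f(x) = x₁ + ⋯ + x_d` on the grid
`{h, 2h, …, Nh}^d` has canonical rank exactly `d`: it is a sum of `d` rank-1 tensors,
but not a sum of fewer than `d` rank-1 tensors. -/
theorem sampled_sum_tensor_canonical_rank_eq_dim
    (d N : ℕ) (hd : 2 ≤ d) (hN : 2 ≤ N) (h : ℝ) (hh : 0 < h)
    (T : (Fin d → Fin N) → ℝ)
    (hT : ∀ i, T i = ∑ ℓ : Fin d, ((i ℓ : ℕ) + 1 : ℝ) * h) :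
    (∃ u : Fin d → Fin d → Fin N → ℝ,
        ∀ i, T i = ∑ r : Fin d, ∏ ℓ : Fin d, u r ℓ (i ℓ)) ∧
    (∀ R : ℕ, R < d →
        ¬ ∃ u : Fin R → Fin d → Fin N → ℝ,
            ∀ i, T i = ∑ r : Fin R, ∏ ℓ : Fin d, u r ℓ (i ℓ)) := by
  constructor
  · refine ⟨fun r ℓ x => if ℓ = r then ((x : ℕ) + 1 : ℝ) * h else 1, fun i => ?_⟩
    rw [hT]
    apply Finset.sum_congr rfl
    intro r _
    rw [Finset.prod_eq_single r]
    · simp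
    · intro b _ hb; simp [hb]
    · simp
  · rintro R hR ⟨u, hu⟩
    obtain ⟨d', rfl⟩ : ∃ d', d = d' + 1 := ⟨d - 1, by omega⟩
    have := sum_tensor_rank_lb N hN h (ne_of_gt hh) d' R 0 u
      (fun i => by rw [add_zero, ← hT, hu])
    omega
end

section
/- Let d ≥ 2, N ≥ 2 and h > 0, and let X_ℓ ∈ ℝ^N be the vector X_ℓ(i) = (i+1)h. Define the tensor T : (Fin N)^d → ℝ by T(i) = Σ_{ℓ=1}^{d} X_ℓ(i_ℓ), and for each ε ≠ 0 define T_ε : (Fin N)^d → ℝ by T_ε(i) = ( Π_{ℓ=1}^{d} (1 + ε X_ℓ(i_ℓ)) − 1 ) / ε. Then (a) each T_ε has canonical rank at most 2, being the difference of two rank-1 tensors scaled by 1/ε, and (b) T_ε converges to T entrywise (equivalently, in any norm on the finite-dimensional tensor space) as ε → 0. Consequently the tensor T, whose canonical rank is d, is a limit of tensors of canonical rank at most 2, so the set of tensors of canonical rank ≤ 2 is not closed when d ≥ 3. -/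
lemma key_cube (h k p0 p1 q0 q1 r0 r1 s0 s1 t0 t1 u0 u1 : ℝ) (hh : h ≠ 0)
    (e000 : p0*q0*r0 + s0*t0*u0 = k)
    (e001 : p0*q0*r1 + s0*t0*u1 = k+h)
    (e010 : p0*q1*r0 + s0*t1*u0 = k+h)
    (e011 : p0*q1*r1 + s0*t1*u1 = k+2*h)
    (e100 : p1*q0*r0 + s1*t0*u0 = k+h)
    (e101 : p1*q0*r1 + s1*t0*u1 = k+2*h)
    (e110 : p1*q1*r0 + s1*t1*u0 = k+2*h)
    (e111 : p1*q1*r1 + s1*t1*u1 = k+3*h) : False := by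
  set B : ℝ := (q0*t1 - q1*t0)*(r0*u1 - r1*u0) with hB
  have m1 : (p0*q0*r0 + s0*t0*u0)*(p0*q1*r1 + s0*t1*u1) = k*(k+2*h) := by
    rw [e000, e011]
  have m2 : (p0*q0*r1 + s0*t0*u1)*(p0*q1*r0 + s0*t1*u0) = (k+h)*(k+h) := by
    rw [e001, e010]
  have m3 : (p1*q0*r0 + s1*t0*u0)*(p1*q1*r1 + s1*t1*u1) = (k+h)*(k+3*h) := by
    rw [e100, e111]
  have m4 : (p1*q0*r1 + s1*t0*u1)*(p1*q1*r0 + s1*t1*u0) = (k+2*h)*(k+2*h) := by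
    rw [e101, e110]
  have m5 : (p0*q0*r0 + s0*t0*u0)*(p1*q1*r1 + s1*t1*u1) = k*(k+3*h) := by
    rw [e000, e111]
  have m6 : (p1*q0*r0 + s1*t0*u0)*(p0*q1*r1 + s0*t1*u1) = (k+h)*(k+2*h) := by
    rw [e100, e011]
  have m7 : (p0*q0*r1 + s0*t0*u1)*(p1*q1*r0 + s1*t1*u0) = (k+h)*(k+2*h) := by
    rw [e001, e110]
  have m8 : (p1*q0*r1 + s1*t0*u1)*(p0*q1*r0 + s0*t1*u0) = (k+2*h)*(k+h) := by
    rw [e101, e010]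
  have E1 : p0*s0*B = -h^2 := by linear_combination m1 - m2
  have E2 : p1*s1*B = -h^2 := by linear_combination m3 - m4
  have E3 : p0*s1*B + p1*s0*B = -2*h^2 := by linear_combination m5 + m6 - m7 - m8
  have m9 : (p0*s0*B)*(p1*s1*B) = (-h^2)*(-h^2) := by rw [E1, E2]
  have hab2 : (p0*s1*B)*(p1*s0*B) = h^4 := by linear_combination m9
  have hsq : (p0*s1*B - p1*s0*B)^2 = 0 := by
    linear_combination (p0*s1*B + p1*s0*B - 2*h^2) * E3 - 4 * hab2
  have hd0 : p0*s1*B - p1*s0*B = 0 := by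
    have := sq_eq_zero_iff.mp hsq
    linarith
  have ha : p0*s1*B = -h^2 := by linarith
  have hb : p1*s0*B = -h^2 := by linarith
  have hh2 : h^2 ≠ 0 := pow_ne_zero 2 hh
  have hp0B : p0*B ≠ 0 := by
    intro hz
    have h0 : p0*s0*B = 0 := by linear_combination s0 * hz
    rw [E1] at h0
    exact hh2 (by linarith)
  have hs0B : s0*B ≠ 0 := by
    intro hz
    have h0 : p0*s0*B = 0 := by linear_combination p0 * hz
    rw [E1] at h0
    exact hh2 (by linarith)
  have hs : s1 = s0 := by
    have h1 : p0*B*(s1 - s0) = 0 := by linear_combination ha - E1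
    rcases mul_eq_zero.mp h1 with h2 | h2
    · exact absurd h2 hp0B
    · linarith
  have hp : p1 = p0 := by
    have h1 : s0*B*(p1 - p0) = 0 := by linear_combination hb - E1
    rcases mul_eq_zero.mp h1 with h2 | h2
    · exact absurd h2 hs0B
    · linarith
  have : h = 0 := by linear_combination e000 - e100 + q0*r0*hp + t0*u0*hs
  exact hh this

/-- Non-closedness of the set of canonical tensors of bounded rank: the rank-`d` tensor
`T(i) = Σ_ℓ X_ℓ(i_ℓ)` is the entrywise limit, as `ε → 0`, of the tensors
`T_ε(i) = (Π_ℓ (1 + ε X_ℓ(i_ℓ)) − 1)/ε`, each of canonical rank at most 2; hence for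
`d ≥ 3` the set of tensors of canonical rank at most 2 is not closed. -/
theorem rank_two_tensors_not_closed
    (d N : ℕ) (hd : 2 ≤ d) (hN : 2 ≤ N) (h : ℝ) (hh : 0 < h)
    (X : Fin d → Fin N → ℝ) (hX : ∀ ℓ i, X ℓ i = ((i : ℕ) + 1 : ℝ) * h)
    (T : (Fin d → Fin N) → ℝ) (hT : ∀ i, T i = ∑ ℓ : Fin d, X ℓ (i ℓ))
    (Tε : ℝ → (Fin d → Fin N) → ℝ)
    (hTε : ∀ ε i, Tε ε i = ((∏ ℓ : Fin d, (1 + ε * X ℓ (i ℓ))) - 1) / ε) :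
    (∀ ε : ℝ, ε ≠ 0 →
        ∃ u : Fin 2 → Fin d → Fin N → ℝ,
          ∀ i, Tε ε i = ∑ r : Fin 2, ∏ ℓ : Fin d, u r ℓ (i ℓ)) ∧
    (∀ i, Filter.Tendsto (fun ε => Tε ε i) (nhdsWithin 0 {(0 : ℝ)}ᶜ) (nhds (T i))) ∧
    (3 ≤ d → ¬ IsClosed {S : (Fin d → Fin N) → ℝ |
        ∃ u : Fin 2 → Fin d → Fin N → ℝ,
          ∀ i, S i = ∑ r : Fin 2, ∏ ℓ : Fin d, u r ℓ (i ℓ)}) := by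
  have i0 : Fin d := ⟨0, by omega⟩
  -- Part (a)
  have partA : ∀ ε : ℝ, ε ≠ 0 →
      ∃ u : Fin 2 → Fin d → Fin N → ℝ,
        ∀ i, Tε ε i = ∑ r : Fin 2, ∏ ℓ : Fin d, u r ℓ (i ℓ) := by
    intro ε hε
    refine ⟨![fun ℓ j => (1 + ε * X ℓ j) * (if ℓ = i0 then ε⁻¹ else 1),
              fun ℓ j => if ℓ = i0 then -ε⁻¹ else 1], fun i => ?_⟩
    rw [hTε, Fin.sum_univ_two]
    simp only [Matrix.cons_val_zero, Matrix.cons_val_one, Matrix.head_cons]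
    rw [Finset.prod_mul_distrib]
    have h1 : (∏ ℓ : Fin d, (if ℓ = i0 then ε⁻¹ else (1:ℝ))) = ε⁻¹ := by
      rw [Finset.prod_ite_eq' Finset.univ i0 (fun _ => ε⁻¹)]
      simp
    have h2 : (∏ ℓ : Fin d, (if ℓ = i0 then -ε⁻¹ else (1:ℝ))) = -ε⁻¹ := by
      rw [Finset.prod_ite_eq' Finset.univ i0 (fun _ => -ε⁻¹)]
      simp
    rw [h1, h2]
    field_simp
    ring
  -- Part (b)
  have partB : ∀ i, Filter.Tendsto (fun ε => Tε ε i)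
      (nhdsWithin 0 {(0 : ℝ)}ᶜ) (nhds (T i)) := by
    intro i
    have hg : HasDerivAt (fun ε : ℝ => ∏ ℓ : Fin d, (1 + ε * X ℓ (i ℓ)))
        (∑ ℓ : Fin d, X ℓ (i ℓ)) 0 := by
      have hf : ∀ ℓ ∈ Finset.univ, HasDerivAt
          (fun ε : ℝ => 1 + ε * X ℓ (i ℓ)) (X ℓ (i ℓ)) (0:ℝ) := by
        intro ℓ _
        simpa using (hasDerivAt_mul_const (X ℓ (i ℓ))).const_add 1
      have := HasDerivAt.fun_finsetProd hf
      simpa using this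
    have hs := hasDerivAt_iff_tendsto_slope.mp hg
    rw [hT]
    refine hs.congr fun ε => ?_
    rw [slope_def_field, hTε]
    simp
  refine ⟨partA, partB, ?_⟩
  -- Part (c)
  intro hd3 hclosed
  have hmem : T ∈ {S : (Fin d → Fin N) → ℝ |
      ∃ u : Fin 2 → Fin d → Fin N → ℝ,
        ∀ i, S i = ∑ r : Fin 2, ∏ ℓ : Fin d, u r ℓ (i ℓ)} := by
    rw [← hclosed.closure_eq]
    refine mem_closure_of_tendsto (f := fun ε => Tε ε)
      (b := nhdsWithin 0 {(0:ℝ)}ᶜ) ?_ ?_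
    · exact tendsto_pi_nhds.mpr partB
    · exact Filter.eventually_of_mem self_mem_nhdsWithin
        (fun ε hε => partA ε (by simpa using hε))
  obtain ⟨u, hu⟩ := hmem
  -- set up the three distinguished coordinates and the restriction to a 2×2×2 cube
  set a0 : Fin d := ⟨0, by omega⟩ with ha0
  set a1 : Fin d := ⟨1, by omega⟩ with ha1
  set a2 : Fin d := ⟨2, by omega⟩ with ha2
  have h01 : a0 ≠ a1 := by simp [ha0, ha1, Fin.ext_iff]
  have h02 : a0 ≠ a2 := by simp [ha0, ha2, Fin.ext_iff]
  have h12 : a1 ≠ a2 := by simp [ha1, ha2, Fin.ext_iff]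
  obtain ⟨z0, hz0⟩ : ∃ z : Fin N, (z : ℕ) = 0 := ⟨⟨0, by omega⟩, rfl⟩
  obtain ⟨z1, hz1⟩ : ∃ z : Fin N, (z : ℕ) = 1 := ⟨⟨1, by omega⟩, rfl⟩
  set s : Finset (Fin d) := {a0, a1, a2} with hsdef
  set idx : Fin N → Fin N → Fin N → (Fin d → Fin N) :=
    fun x y z ℓ => if ℓ = a0 then x else if ℓ = a1 then y else if ℓ = a2 then z else z0
    with hidx
  have hidx0 : ∀ x y z, idx x y z a0 = x := by intro x y z; simp [hidx]
  have hidx1 : ∀ x y z, idx x y z a1 = y := by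
    intro x y z; simp [hidx, h01.symm]
  have hidx2 : ∀ x y z, idx x y z a2 = z := by
    intro x y z; simp [hidx, h02.symm, h12.symm]
  have hidxo : ∀ x y z ℓ, ℓ ∉ s → idx x y z ℓ = z0 := by
    intro x y z ℓ hℓ
    simp only [hsdef, Finset.mem_insert, Finset.mem_singleton, not_or] at hℓ
    simp [hidx, hℓ.1, hℓ.2.1, hℓ.2.2]
  have hnm0 : a0 ∉ ({a1, a2} : Finset (Fin d)) := by simp [h01, h02]
  have hnm1 : a1 ∉ ({a2} : Finset (Fin d)) := by simp [h12]
  -- the constants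
  set C : Fin 2 → ℝ := fun r => ∏ ℓ ∈ Finset.univ \ s, u r ℓ z0 with hC
  set K : ℝ := ∑ ℓ ∈ Finset.univ \ s, X ℓ z0 with hK
  have key_eq : ∀ x y z : Fin N,
      (C 0 * u 0 a0 x) * u 0 a1 y * u 0 a2 z
        + (C 1 * u 1 a0 x) * u 1 a1 y * u 1 a2 z
      = K + ((x:ℕ)+1:ℝ)*h + ((y:ℕ)+1:ℝ)*h + ((z:ℕ)+1:ℝ)*h := by
    intro x y z
    have hprod : ∀ r : Fin 2, ∏ ℓ : Fin d, u r ℓ (idx x y z ℓ)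
        = C r * u r a0 x * u r a1 y * u r a2 z := by
      intro r
      rw [← Finset.prod_sdiff (Finset.subset_univ s)]
      have hout : ∏ ℓ ∈ Finset.univ \ s, u r ℓ (idx x y z ℓ)
          = C r := by
        refine Finset.prod_congr rfl fun ℓ hℓ => ?_
        rw [hidxo x y z ℓ (Finset.mem_sdiff.mp hℓ).2]
      have hin : ∏ ℓ ∈ s, u r ℓ (idx x y z ℓ)
          = u r a0 x * u r a1 y * u r a2 z := by
        rw [hsdef]
        rw [Finset.prod_insert hnm0, Finset.prod_insert hnm1, Finset.prod_singleton]
        rw [hidx0, hidx1, hidx2]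
        ring
      rw [hout, hin]
      ring
    have hsum : T (idx x y z)
        = K + ((x:ℕ)+1:ℝ)*h + ((y:ℕ)+1:ℝ)*h + ((z:ℕ)+1:ℝ)*h := by
      rw [hT]
      rw [← Finset.sum_sdiff (Finset.subset_univ s)]
      have hout : ∑ ℓ ∈ Finset.univ \ s, X ℓ (idx x y z ℓ) = K := by
        refine Finset.sum_congr rfl fun ℓ hℓ => ?_
        rw [hidxo x y z ℓ (Finset.mem_sdiff.mp hℓ).2]
      have hin : ∑ ℓ ∈ s, X ℓ (idx x y z ℓ)
          = ((x:ℕ)+1:ℝ)*h + ((y:ℕ)+1:ℝ)*h + ((z:ℕ)+1:ℝ)*h := by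
        rw [hsdef]
        rw [Finset.sum_insert hnm0, Finset.sum_insert hnm1, Finset.sum_singleton]
        rw [hidx0, hidx1, hidx2, hX, hX, hX]
        ring
      rw [hout, hin]
      ring
    have h1 := hu (idx x y z)
    rw [Fin.sum_univ_two, hprod 0, hprod 1, hsum] at h1
    linear_combination -h1
  have heq := fun x y z => key_eq x y z
  refine key_cube h (K + 3*h)
    (C 0 * u 0 a0 z0) (C 0 * u 0 a0 z1) (u 0 a1 z0) (u 0 a1 z1)
    (u 0 a2 z0) (u 0 a2 z1)
    (C 1 * u 1 a0 z0) (C 1 * u 1 a0 z1) (u 1 a1 z0) (u 1 a1 z1)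
    (u 1 a2 z0) (u 1 a2 z1) hh.ne' ?_ ?_ ?_ ?_ ?_ ?_ ?_ ?_
  · have := heq z0 z0 z0; rw [hz0] at this; push_cast at this; linear_combination this
  · have := heq z0 z0 z1; rw [hz0, hz1] at this; push_cast at this; linear_combination this
  · have := heq z0 z1 z0; rw [hz0, hz1] at this; push_cast at this; linear_combination this
  · have := heq z0 z1 z1; rw [hz0, hz1] at this; push_cast at this; linear_combination this
  · have := heq z1 z0 z0; rw [hz0, hz1] at this; push_cast at this; linear_combination this
  · have := heq z1 z0 z1; rw [hz0, hz1] at this; push_cast at this; linear_combination this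
  · have := heq z1 z1 z0; rw [hz0, hz1] at this; push_cast at this; linear_combination this
  · have := heq z1 z1 z1; rw [hz1] at this; push_cast at this; linear_combination this
end

section
/- Let N ≥ 2, d ≥ 2, let A = tridiag(−1, 2, −1) ∈ ℝ^{N×N} (the 1D finite difference Laplacian) and let I_N be the N×N identity matrix. Define the d-dimensional discrete Laplacian Δ_d as the matrix indexed by (Fin d → Fin N) × (Fin d → Fin N) with entries Δ_d(i,j) = Σ_{ℓ=1}^{d} A(i_ℓ, j_ℓ) · Π_{k≠ℓ} [i_k = j_k], i.e. the Kronecker sum A⊗I⊗…⊗I + I⊗A⊗…⊗I + … + I⊗…⊗I⊗A. Then the canonical (Kronecker) rank of Δ_d is exactly d: Δ_d is a sum of d Kronecker-rank-1 matrices, and it is not a sum of fewer than d matrices of the form B^{(1)}⊗…⊗B^{(d)}. -/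
open Finset

private def Zf (m : ℕ) (x : Fin m → Fin 2) : ℝ := ∏ k, if x k = 0 then 1 else 0

private def Wf (m : ℕ) (x : Fin m → Fin 2) : ℝ :=
  ∑ ℓ, ∏ k, (if k = ℓ then (if x k = 1 then (1 : ℝ) else 0) else (if x k = 0 then 1 else 0))

private lemma Zf_zero (m : ℕ) : Zf m (fun _ => 0) = 1 := by simp [Zf]

private lemma Zf_snoc (m : ℕ) (x : Fin m → Fin 2) (b : Fin 2) :
    Zf (m + 1) (Fin.snoc x b) = Zf m x * (if b = 0 then 1 else 0) := by
  unfold Zf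
  rw [Fin.prod_univ_castSucc]
  simp

private lemma Wf_snoc (m : ℕ) (x : Fin m → Fin 2) (b : Fin 2) :
    Wf (m + 1) (Fin.snoc x b) =
      Wf m x * (if b = 0 then 1 else 0) + Zf m x * (if b = 1 then 1 else 0) := by
  unfold Wf Zf
  rw [Fin.sum_univ_castSucc, Finset.sum_mul]
  congr 1
  · refine Finset.sum_congr rfl fun ℓ _ => ?_
    rw [Fin.prod_univ_castSucc]
    have hne : Fin.last m ≠ Fin.castSucc ℓ := (Fin.castSucc_lt_last ℓ).ne'
    simp [Fin.snoc_castSucc, Fin.snoc_last, hne, Fin.castSucc_inj]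
  · rw [Fin.prod_univ_castSucc]
    have h2 : ∀ k : Fin m, Fin.castSucc k ≠ Fin.last m := fun k => (Fin.castSucc_lt_last k).ne
    simp [Fin.snoc_castSucc, Fin.snoc_last, h2]

private lemma key : ∀ (R m : ℕ), R < m → ∀ (lam : ℝ) (c : Fin R → ℝ)
    (u : Fin R → Fin m → Fin 2 → ℝ),
    ¬ (∀ x : Fin m → Fin 2, Wf m x + lam * Zf m x = ∑ r, c r * ∏ k, u r k (x k)) := by
  intro R
  induction R with
  | zero =>
    intro m hm lam c u h
    obtain ⟨m', rfl⟩ : ∃ m', m = m' + 1 := ⟨m - 1, by omega⟩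
    have hx := h (Fin.snoc (fun _ => 0) 1)
    rw [Wf_snoc, Zf_snoc, Zf_zero] at hx
    simp at hx
  | succ R ih =>
    intro m hm lam c u h
    obtain ⟨m', rfl⟩ : ∃ m', m = m' + 1 := ⟨m - 1, by omega⟩
    set a : Fin (R + 1) → ℝ := fun r => c r * u r (Fin.last m') 0 with ha
    set b : Fin (R + 1) → ℝ := fun r => c r * u r (Fin.last m') 1 with hb
    have h0 : ∀ x : Fin m' → Fin 2,
        Wf m' x + lam * Zf m' x =
          ∑ r, a r * ∏ k : Fin m', u r k.castSucc (x k) := by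
      intro x
      have hx := h (Fin.snoc x 0)
      rw [Wf_snoc, Zf_snoc] at hx
      simp only [Fin.prod_univ_castSucc, Fin.snoc_castSucc, Fin.snoc_last] at hx
      norm_num at hx
      rw [hx]
      refine Finset.sum_congr rfl fun r _ => ?_
      simp only [ha]
      ring
    have h1 : ∀ x : Fin m' → Fin 2,
        Zf m' x =
          ∑ r, b r * ∏ k : Fin m', u r k.castSucc (x k) := by
      intro x
      have hx := h (Fin.snoc x 1)
      rw [Wf_snoc, Zf_snoc] at hx
      simp only [Fin.prod_univ_castSucc, Fin.snoc_castSucc, Fin.snoc_last] at hx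
      norm_num at hx
      rw [hx]
      refine Finset.sum_congr rfl fun r _ => ?_
      simp only [hb]
      ring
    by_cases hall : ∀ r, b r = 0
    · have h2 := h1 (fun _ => 0)
      rw [Zf_zero] at h2
      simp only [hall, zero_mul, Finset.sum_const_zero] at h2
      exact one_ne_zero h2
    · push_neg at hall
      obtain ⟨r0, hr0⟩ := hall
      set μ := a r0 / b r0 with hμ
      refine ih m' (by omega) (lam - μ)
        (fun r => a (r0.succAbove r) - μ * b (r0.succAbove r))
        (fun r k => u (r0.succAbove r) k.castSucc) ?_
      intro x
      have key2 : ∀ r : Fin (R+1), (a r - μ * b r) * ∏ k : Fin m', u r k.castSucc (x k) =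
          a r * ∏ k : Fin m', u r k.castSucc (x k) - μ * (b r * ∏ k : Fin m', u r k.castSucc (x k)) := by
        intro r; ring
      have hsum : (∑ r : Fin (R+1), (a r - μ * b r) * ∏ k : Fin m', u r k.castSucc (x k))
          = Wf m' x + (lam - μ) * Zf m' x := by
        simp only [key2]
        rw [Finset.sum_sub_distrib, ← Finset.mul_sum, ← h0 x, ← h1 x]
        ring
      rw [← hsum, Fin.sum_univ_succAbove _ r0]
      have : a r0 - μ * b r0 = 0 := by
        rw [hμ]; field_simp; ring
      rw [this, zero_mul, zero_add]


/-- The `d`-dimensional discrete Laplacian (the Kronecker sum of `d` copies of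
`tridiag(−1,2,−1)`) has canonical (Kronecker) rank exactly `d`: it is a sum of `d`
Kronecker-rank-1 matrices, but not a sum of fewer than `d` such matrices. -/
theorem discrete_laplacian_kronecker_rank_eq_dim
    (d N : ℕ) (hd : 2 ≤ d) (hN : 2 ≤ N)
    (A : Matrix (Fin N) (Fin N) ℝ)
    (hA : ∀ i j : Fin N, A i j =
      if (i : ℕ) = (j : ℕ) then 2
      else if (i : ℕ) + 1 = (j : ℕ) ∨ (j : ℕ) + 1 = (i : ℕ) then -1 else 0)
    (Δ : Matrix (Fin d → Fin N) (Fin d → Fin N) ℝ)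
    (hΔ : ∀ i j, Δ i j = ∑ ℓ : Fin d, A (i ℓ) (j ℓ) *
      ∏ k ∈ Finset.univ.erase ℓ, (if i k = j k then (1 : ℝ) else 0)) :
    (∃ B : Fin d → Fin d → Matrix (Fin N) (Fin N) ℝ,
        ∀ i j, Δ i j = ∑ r : Fin d, ∏ ℓ : Fin d, B r ℓ (i ℓ) (j ℓ)) ∧
    (∀ R : ℕ, R < d →
        ¬ ∃ B : Fin R → Fin d → Matrix (Fin N) (Fin N) ℝ,
            ∀ i j, Δ i j = ∑ r : Fin R, ∏ ℓ : Fin d, B r ℓ (i ℓ) (j ℓ)) := by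
  constructor
  · refine ⟨fun r ℓ => if ℓ = r then A else 1, fun i j => ?_⟩
    rw [hΔ]
    refine Finset.sum_congr rfl fun r _ => ?_
    rw [← Finset.mul_prod_erase Finset.univ
      (fun ℓ => (if ℓ = r then A else 1) (i ℓ) (j ℓ)) (Finset.mem_univ r)]
    simp only [if_pos rfl]
    congr 1
    refine Finset.prod_congr rfl fun k hk => ?_
    rw [if_neg (Finset.ne_of_mem_erase hk), Matrix.one_apply]
  · rintro R hR ⟨B, hB⟩
    have hN0 : 0 < N := by omega
    have hN1 : 1 < N := by omega
    set z : Fin N := ⟨0, hN0⟩ with hz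
    set e : Fin 2 → Fin N := fun v => ⟨v.val, by omega⟩ with he
    set w : Fin 2 → Fin 2 → ℝ :=
      fun s t => if s = 0 then (if t = 0 then 1 else 2) else (if t = 0 then 0 else -1) with hw
    have hez : e 0 = z := by simp [he, hz]
    have hzev : ∀ v : Fin 2, (z = e v) ↔ v = 0 := by
      intro v
      simp only [he, hz, Fin.ext_iff]
      omega
    have hA00 : A z z = 2 := by rw [hA]; simp
    have hA01 : A z (e 1) = -1 := by
      rw [hA]
      simp [he, hz]
    refine key R d hR 0 (fun _ => 1) (fun r k v => ∑ t : Fin 2, w v t * B r k z (e t)) ?_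
    intro x
    have hS1 : (∑ j : Fin d → Fin 2, (∏ k, w (x k) (j k)) * Δ (fun _ => z) (fun k => e (j k)))
        = ∑ r : Fin R, ∏ k, ∑ t : Fin 2, w (x k) t * B r k z (e t) := by
      calc (∑ j : Fin d → Fin 2, (∏ k, w (x k) (j k)) * Δ (fun _ => z) (fun k => e (j k)))
          = ∑ j : Fin d → Fin 2, ∑ r : Fin R, ∏ k, (w (x k) (j k) * B r k z (e (j k))) := by
            refine Finset.sum_congr rfl fun j _ => ?_
            rw [hB, Finset.mul_sum]
            refine Finset.sum_congr rfl fun r _ => ?_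
            rw [← Finset.prod_mul_distrib]
        _ = ∑ r : Fin R, ∑ j : Fin d → Fin 2, ∏ k, (w (x k) (j k) * B r k z (e (j k))) :=
            Finset.sum_comm
        _ = ∑ r : Fin R, ∏ k, ∑ t : Fin 2, w (x k) t * B r k z (e t) := by
            refine Finset.sum_congr rfl fun r _ => ?_
            rw [Finset.prod_univ_sum, Fintype.piFinset_univ]
    have hS2 : (∑ j : Fin d → Fin 2, (∏ k, w (x k) (j k)) * Δ (fun _ => z) (fun k => e (j k)))
        = Wf d x := by
      calc (∑ j : Fin d → Fin 2, (∏ k, w (x k) (j k)) * Δ (fun _ => z) (fun k => e (j k)))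
          = ∑ j : Fin d → Fin 2, ∑ ℓ : Fin d, ∏ k,
              (w (x k) (j k) * (if k = ℓ then A z (e (j k)) else (if j k = 0 then 1 else 0))) := by
            refine Finset.sum_congr rfl fun j _ => ?_
            rw [hΔ, Finset.mul_sum]
            refine Finset.sum_congr rfl fun ℓ _ => ?_
            have hfull : A z (e (j ℓ)) * ∏ k ∈ Finset.univ.erase ℓ,
                (if z = e (j k) then (1:ℝ) else 0)
                = ∏ k, (if k = ℓ then A z (e (j k)) else (if j k = 0 then (1:ℝ) else 0)) := by
              rw [← Finset.mul_prod_erase Finset.univ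
                (fun k => (if k = ℓ then A z (e (j k)) else (if j k = 0 then (1:ℝ) else 0)))
                (Finset.mem_univ ℓ)]
              simp only [if_pos rfl]
              congr 1
              refine Finset.prod_congr rfl fun k hk => ?_
              rw [if_neg (Finset.ne_of_mem_erase hk)]
              simp [hzev]
            rw [hfull, ← Finset.prod_mul_distrib]
        _ = ∑ ℓ : Fin d, ∑ j : Fin d → Fin 2, ∏ k,
              (w (x k) (j k) * (if k = ℓ then A z (e (j k)) else (if j k = 0 then 1 else 0))) :=
            Finset.sum_comm
        _ = ∑ ℓ : Fin d, ∏ k, ∑ t : Fin 2,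
              (w (x k) t * (if k = ℓ then A z (e t) else (if t = 0 then 1 else 0))) := by
            refine Finset.sum_congr rfl fun ℓ _ => ?_
            rw [Finset.prod_univ_sum, Fintype.piFinset_univ]
        _ = Wf d x := by
            refine Finset.sum_congr rfl fun ℓ _ => Finset.prod_congr rfl fun k _ => ?_
            have hxk : x k = 0 ∨ x k = 1 := by omega
            by_cases hkl : k = ℓ
            · subst hkl
              rcases hxk with hx | hx <;>
                simp [hx, Fin.sum_univ_two, hw, hA00, hA01, hez] <;> ring
            · rcases hxk with hx | hx <;> simp [hkl, hx, Fin.sum_univ_two, hw]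
    simp only [zero_mul, add_zero, one_mul]
    rw [← hS2, hS1]
end

section
/- Let N ≥ 2, d ≥ 2, let A = tridiag(−1, 2, −1) ∈ ℝ^{N×N} and define the d-dimensional discrete Laplacian Δ_d as the Kronecker sum with entries Δ_d(i,j) = Σ_{ℓ=1}^{d} A(i_ℓ, j_ℓ) · Π_{k≠ℓ} [i_k = j_k] on the index set (Fin d → Fin N)×(Fin d → Fin N). Then for every p with 1 ≤ p ≤ d−1, the TT-unfolding matrix of Δ_d at position p, namely the matrix U_p with row index ((i_1,j_1),…,(i_p,j_p)) and column index ((i_{p+1},j_{p+1}),…,(i_d,j_d)) and entries U_p = Δ_d(i,j), has matrix rank exactly 2. Hence the TT-rank of Δ_d equals 2. -/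
/-- Pasting of a `p`-tuple and a `(d-p)`-tuple of indices into a `d`-tuple. -/
def glueIdx {N d p : ℕ} (hp : p ≤ d) (a : Fin p → Fin N) (b : Fin (d - p) → Fin N) :
    Fin d → Fin N :=
  fun ℓ => if h : (ℓ : ℕ) < p then a ⟨ℓ, h⟩
    else b ⟨(ℓ : ℕ) - p, by have := ℓ.isLt; omega⟩

/-- splitting equivalence -/
def myE (p d : ℕ) (h : p + (d - p) = d) : Fin p ⊕ Fin (d - p) ≃ Fin d :=
  finSumFinEquiv.trans (finCongr h)

lemma myE_inl_val {p d : ℕ} (h : p + (d - p) = d) (ℓ : Fin p) :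
    ((myE p d h (Sum.inl ℓ)) : ℕ) = ℓ := by simp [myE]

lemma myE_inr_val {p d : ℕ} (h : p + (d - p) = d) (m : Fin (d - p)) :
    ((myE p d h (Sum.inr m)) : ℕ) = p + m := by simp [myE]

lemma glue_myE_inl {N d p : ℕ} (hp : p ≤ d) (h : p + (d - p) = d)
    (a : Fin p → Fin N) (b : Fin (d - p) → Fin N) (ℓ : Fin p) :
    glueIdx hp a b (myE p d h (Sum.inl ℓ)) = a ℓ := by
  have hv := myE_inl_val h ℓ
  simp only [glueIdx]
  rw [dif_pos (by rw [hv]; exact ℓ.isLt)]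
  exact congrArg a (Fin.ext hv)

lemma glue_myE_inr {N d p : ℕ} (hp : p ≤ d) (h : p + (d - p) = d)
    (a : Fin p → Fin N) (b : Fin (d - p) → Fin N) (m : Fin (d - p)) :
    glueIdx hp a b (myE p d h (Sum.inr m)) = b m := by
  have hv := myE_inr_val h m
  simp only [glueIdx]
  rw [dif_neg (by omega)]
  exact congrArg b (Fin.ext (show ((myE p d h (Sum.inr m)) : ℕ) - p = (m:ℕ) by omega))

lemma forall_ne_glue_left {N d p : ℕ} (hp : p ≤ d) (h : p + (d - p) = d)
    (a₁ a₂ : Fin p → Fin N) (b₁ b₂ : Fin (d - p) → Fin N) (ℓ : Fin p) :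
    (∀ k : Fin d, k ≠ myE p d h (Sum.inl ℓ) →
      glueIdx hp a₁ b₁ k = glueIdx hp a₂ b₂ k) ↔
    ((∀ k : Fin p, k ≠ ℓ → a₁ k = a₂ k) ∧ b₁ = b₂) := by
  constructor
  · intro hfa
    refine ⟨fun k hk => ?_, funext fun m => ?_⟩
    · have := hfa (myE p d h (Sum.inl k))
        (fun hc => hk (by simpa using (myE p d h).injective hc))
      rwa [glue_myE_inl, glue_myE_inl] at this
    · have := hfa (myE p d h (Sum.inr m))
        (fun hc => by simpa using (myE p d h).injective hc)
      rwa [glue_myE_inr, glue_myE_inr] at this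
  · rintro ⟨ha, rfl⟩ k hk
    by_cases hkp : (k : ℕ) < p
    · simp only [glueIdx, dif_pos hkp]
      refine ha _ fun hc => hk ?_
      exact Fin.ext (by rw [myE_inl_val]; exact congrArg Fin.val hc)
    · simp only [glueIdx, dif_neg hkp]

lemma forall_ne_glue_right {N d p : ℕ} (hp : p ≤ d) (h : p + (d - p) = d)
    (a₁ a₂ : Fin p → Fin N) (b₁ b₂ : Fin (d - p) → Fin N) (m : Fin (d - p)) :
    (∀ k : Fin d, k ≠ myE p d h (Sum.inr m) →
      glueIdx hp a₁ b₁ k = glueIdx hp a₂ b₂ k) ↔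
    (a₁ = a₂ ∧ (∀ k : Fin (d - p), k ≠ m → b₁ k = b₂ k)) := by
  constructor
  · intro hfa
    refine ⟨funext fun k => ?_, fun k hk => ?_⟩
    · have := hfa (myE p d h (Sum.inl k))
        (fun hc => by simpa using (myE p d h).injective hc)
      rwa [glue_myE_inl, glue_myE_inl] at this
    · have := hfa (myE p d h (Sum.inr k))
        (fun hc => hk (by simpa using (myE p d h).injective hc))
      rwa [glue_myE_inr, glue_myE_inr] at this
  · rintro ⟨rfl, hb⟩ k hk
    by_cases hkp : (k : ℕ) < p
    · simp only [glueIdx, dif_pos hkp]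
    · simp only [glueIdx, dif_neg hkp]
      refine hb _ fun hc => hk ?_
      refine Fin.ext (by rw [myE_inr_val]; have := congrArg Fin.val hc; simp at this; omega)

/-- row/column factor. -/
noncomputable def Fdef (N n : ℕ) (A : Matrix (Fin N) (Fin N) ℝ)
    (a : (Fin n → Fin N) × (Fin n → Fin N)) : ℝ :=
  ∑ ℓ, A (a.1 ℓ) (a.2 ℓ) * (if ∀ k, k ≠ ℓ → a.1 k = a.2 k then 1 else 0)

def Hdef {N n : ℕ} (a : (Fin n → Fin N) × (Fin n → Fin N)) : ℝ :=
  if a.1 = a.2 then 1 else 0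

lemma Fdef_delta (N n : ℕ) (hn : 0 < n) (h0 : 0 < N) (h1 : 1 < N)
    (A : Matrix (Fin N) (Fin N) ℝ)
    (hA : ∀ i j : Fin N, A i j =
      if (i : ℕ) = (j : ℕ) then 2
      else if (i : ℕ) + 1 = (j : ℕ) ∨ (j : ℕ) + 1 = (i : ℕ) then -1 else 0) :
    Fdef N n A (fun k => if k = ⟨0, hn⟩ then (⟨1, h1⟩ : Fin N) else ⟨0, h0⟩,
      fun _ => ⟨0, h0⟩) = -1 := by
  unfold Fdef
  rw [Finset.sum_eq_single (⟨0, hn⟩ : Fin n)]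
  · dsimp only
    rw [if_pos rfl, if_pos (fun k hk => if_neg hk), hA]
    norm_num
  · intro ℓ _ hℓ
    dsimp only
    refine mul_eq_zero_of_right _ (if_neg fun hall => ?_)
    have := hall ⟨0, hn⟩ (Ne.symm hℓ)
    rw [if_pos rfl] at this
    exact absurd (congrArg Fin.val this) (by simp)
  · simp

lemma Hdef_delta (N n : ℕ) (hn : 0 < n) (h0 : 0 < N) (h1 : 1 < N) :
    Hdef ((fun k => if k = ⟨0, hn⟩ then (⟨1, h1⟩ : Fin N) else ⟨0, h0⟩,
      fun _ => (⟨0, h0⟩ : Fin N))) = 0 := by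
  unfold Hdef
  refine if_neg fun hc => ?_
  have := congrFun hc ⟨0, hn⟩
  dsimp only at this
  rw [if_pos rfl] at this
  exact absurd (congrArg Fin.val this) (by simp)

/-- Every TT-unfolding matrix of the `d`-dimensional discrete Laplacian (the Kronecker
sum of `d` copies of `tridiag(−1,2,−1)`), grouping the first `p` index pairs as rows and
the remaining `d − p` pairs as columns, has matrix rank exactly 2; hence the TT-rank of
`Δ_d` equals 2. -/
theorem discrete_laplacian_tt_unfolding_rank_eq_two
    (d N : ℕ) (hd : 2 ≤ d) (hN : 2 ≤ N)
    (A : Matrix (Fin N) (Fin N) ℝ)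
    (hA : ∀ i j : Fin N, A i j =
      if (i : ℕ) = (j : ℕ) then 2
      else if (i : ℕ) + 1 = (j : ℕ) ∨ (j : ℕ) + 1 = (i : ℕ) then -1 else 0)
    (Δ : Matrix (Fin d → Fin N) (Fin d → Fin N) ℝ)
    (hΔ : ∀ i j, Δ i j = ∑ ℓ : Fin d, A (i ℓ) (j ℓ) *
      ∏ k ∈ Finset.univ.erase ℓ, (if i k = j k then (1 : ℝ) else 0))
    (p : ℕ) (hp1 : 1 ≤ p) (hp2 : p ≤ d - 1)
    (U : Matrix ((Fin p → Fin N) × (Fin p → Fin N))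
        ((Fin (d - p) → Fin N) × (Fin (d - p) → Fin N)) ℝ)
    (hU : ∀ a b, U a b =
      Δ (glueIdx (by omega) a.1 b.1) (glueIdx (by omega) a.2 b.2)) :
    U.rank = 2 := by
  have hpd : p ≤ d := by omega
  have hq : p + (d - p) = d := by omega
  -- Step 1: rewrite products as indicators
  have hΔ' : ∀ i j, Δ i j = ∑ ℓ : Fin d, A (i ℓ) (j ℓ) *
      (if ∀ k, k ≠ ℓ → i k = j k then (1:ℝ) else 0) := by
    intro i j
    rw [hΔ]
    refine Finset.sum_congr rfl fun ℓ _ => ?_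
    rw [Finset.prod_boole]
    simp only [Finset.mem_erase, Finset.mem_univ, and_true]
  -- Step 2: key rank-2 factorization
  have key : ∀ a₁ a₂ b₁ b₂, U (a₁, a₂) (b₁, b₂) =
      Fdef N p A (a₁, a₂) * Hdef (b₁, b₂) + Hdef (a₁, a₂) * Fdef N (d - p) A (b₁, b₂) := by
    intro a₁ a₂ b₁ b₂
    rw [hU, hΔ']
    rw [← Equiv.sum_comp (myE p d hq)
      (fun ℓ => A (glueIdx hpd a₁ b₁ ℓ) (glueIdx hpd a₂ b₂ ℓ) *
        (if ∀ k, k ≠ ℓ → glueIdx hpd a₁ b₁ k = glueIdx hpd a₂ b₂ k then (1:ℝ) else 0))]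
    rw [Fintype.sum_sum_type]
    simp only [glue_myE_inl, glue_myE_inr, forall_ne_glue_left hpd hq,
      forall_ne_glue_right hpd hq]
    unfold Fdef Hdef
    by_cases hb : b₁ = b₂ <;> by_cases ha : a₁ = a₂ <;>
      simp [hb, ha, Finset.mul_sum, Finset.sum_mul]
  -- Step 3: rank ≤ 2
  classical
  set B : Matrix ((Fin p → Fin N) × (Fin p → Fin N)) (Fin 2) ℝ :=
    fun a i => if i = 0 then Fdef N p A a else Hdef a with hB
  set C : Matrix (Fin 2) ((Fin (d - p) → Fin N) × (Fin (d - p) → Fin N)) ℝ :=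
    fun i b => if i = 0 then Hdef b else Fdef N (d - p) A b with hC
  have hUBC : U = B * C := by
    ext ⟨a₁, a₂⟩ ⟨b₁, b₂⟩
    rw [Matrix.mul_apply, Fin.sum_univ_two, key]
    simp [hB, hC]
  have hle : U.rank ≤ 2 := by
    rw [hUBC]
    exact (Matrix.rank_mul_le_left B C).trans
      (by simpa using B.rank_le_card_width)
  -- Step 4: rank ≥ 2 via a 2×2 submatrix with nonzero determinant
  have hp0 : 0 < p := hp1
  have hq0 : 0 < d - p := by omega
  have h0 : 0 < N := by omega
  have h1 : 1 < N := hN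
  set δa : Fin p → Fin N := fun k => if k = ⟨0, hp0⟩ then ⟨1, h1⟩ else ⟨0, h0⟩ with hδa
  set δb : Fin (d - p) → Fin N := fun k => if k = ⟨0, hq0⟩ then ⟨1, h1⟩ else ⟨0, h0⟩ with hδb
  set r0 : (Fin p → Fin N) × (Fin p → Fin N) := (fun _ => ⟨0, h0⟩, fun _ => ⟨0, h0⟩) with hr0
  set r1 : (Fin p → Fin N) × (Fin p → Fin N) := (δa, fun _ => ⟨0, h0⟩) with hr1
  set c0 : (Fin (d - p) → Fin N) × (Fin (d - p) → Fin N) :=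
    (fun _ => ⟨0, h0⟩, fun _ => ⟨0, h0⟩) with hc0
  set c1 : (Fin (d - p) → Fin N) × (Fin (d - p) → Fin N) := (δb, fun _ => ⟨0, h0⟩) with hc1
  set ri : Fin 2 → _ := ![r0, r1] with hri
  set ci : Fin 2 → _ := ![c0, c1] with hci
  set P : Matrix (Fin 2) ((Fin p → Fin N) × (Fin p → Fin N)) ℝ :=
    fun i r => if r = ri i then 1 else 0 with hP
  set Q : Matrix ((Fin (d - p) → Fin N) × (Fin (d - p) → Fin N)) (Fin 2) ℝ :=
    fun c j => if c = ci j then 1 else 0 with hQ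
  have hW : ∀ i j, (P * U * Q) i j = U (ri i) (ci j) := by
    intro i j
    rw [Matrix.mul_apply]
    have : ∀ c, (P * U) i c = U (ri i) c := by
      intro c
      rw [Matrix.mul_apply, hP]
      simp [Finset.sum_ite_eq]
    simp only [this, hQ]
    simp [Finset.sum_ite_eq']
  -- entry values
  have hF1 : Fdef N p A r1 = -1 := Fdef_delta N p hp0 h0 h1 A hA
  have hK1 : Fdef N (d - p) A c1 = -1 := Fdef_delta N (d - p) hq0 h0 h1 A hA
  have hH1 : Hdef r1 = 0 := Hdef_delta N p hp0 h0 h1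
  have hG1 : Hdef c1 = 0 := Hdef_delta N (d - p) hq0 h0 h1
  have hH0 : Hdef r0 = 1 := if_pos rfl
  have hG0 : Hdef c0 = 1 := if_pos rfl
  have hW01 : (P * U * Q) 0 1 = -1 := by
    rw [hW]; show U r0 c1 = -1
    rw [hr0, hc1, key, ← hr0, ← hc1, hG1, hH0, hK1]; ring
  have hW10 : (P * U * Q) 1 0 = -1 := by
    rw [hW]; show U r1 c0 = -1
    rw [hr1, hc0, key, ← hr1, ← hc0, hH1, hG0, hF1]; ring
  have hW11 : (P * U * Q) 1 1 = 0 := by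
    rw [hW]; show U r1 c1 = 0
    rw [hr1, hc1, key, ← hr1, ← hc1, hH1, hG1]; ring
  have hdet : (P * U * Q).det ≠ 0 := by
    rw [Matrix.det_fin_two, hW01, hW10, hW11]
    norm_num
  have hunit : IsUnit (P * U * Q) :=
    (Matrix.isUnit_iff_isUnit_det _).mpr (isUnit_iff_ne_zero.mpr hdet)
  have hge : 2 ≤ U.rank := by
    have h2 : (P * U * Q).rank = 2 := by
      rw [Matrix.rank_of_isUnit _ hunit]; simp
    calc 2 = (P * U * Q).rank := h2.symm
      _ ≤ (P * U).rank := Matrix.rank_mul_le_left _ _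
      _ ≤ U.rank := Matrix.rank_mul_le_right _ _
  omega
end

section
/- Let N ≥ 2, d ≥ 2, let A = tridiag(−1, 2, −1) ∈ ℝ^{N×N} and define the d-dimensional discrete Laplacian Δ_d as the Kronecker sum with entries Δ_d(i,j) = Σ_{ℓ=1}^{d} A(i_ℓ, j_ℓ) · Π_{k≠ℓ} [i_k = j_k] on the index set (Fin d → Fin N)×(Fin d → Fin N). Then for every mode ℓ ∈ {1,…,d}, the mode-ℓ Tucker unfolding matrix of Δ_d, namely the matrix V_ℓ with row index (i_ℓ, j_ℓ) ∈ Fin N × Fin N and column index the collection of all remaining pairs (i_k, j_k), k ≠ ℓ, and entries V_ℓ = Δ_d(i,j), has matrix rank exactly 2. Hence the Tucker rank of Δ_d equals (2,…,2). -/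
/-- Insertion of a value at mode `ℓ` into a tuple indexed by the remaining modes. -/
def insertIdx {N d : ℕ} (ℓ : Fin d) (v : Fin N)
    (c : {k : Fin d // k ≠ ℓ} → Fin N) : Fin d → Fin N :=
  fun k => if h : k = ℓ then v else c ⟨k, h⟩

/-- First column functional: product of Kronecker deltas over the remaining modes. -/
def gcol {N d : ℕ} (ℓ : Fin d) (z : Fin N)
    (b : ({k : Fin d // k ≠ ℓ} → Fin N) × ({k : Fin d // k ≠ ℓ} → Fin N)) : ℝ :=
  ∏ k ∈ Finset.univ.erase ℓ,
    (if insertIdx ℓ z b.1 k = insertIdx ℓ z b.2 k then (1 : ℝ) else 0)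

/-- Second column functional: the off-mode part of the Kronecker sum. -/
def hcol {N d : ℕ} (ℓ : Fin d) (A : Matrix (Fin N) (Fin N) ℝ) (z : Fin N)
    (b : ({k : Fin d // k ≠ ℓ} → Fin N) × ({k : Fin d // k ≠ ℓ} → Fin N)) : ℝ :=
  ∑ m ∈ Finset.univ.erase ℓ, A (insertIdx ℓ z b.1 m) (insertIdx ℓ z b.2 m) *
    ∏ k ∈ (Finset.univ.erase m).erase ℓ,
      (if insertIdx ℓ z b.1 k = insertIdx ℓ z b.2 k then (1 : ℝ) else 0)

/-- Every mode-`ℓ` Tucker unfolding matrix of the `d`-dimensional discrete Laplacian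
(the Kronecker sum of `d` copies of `tridiag(−1,2,−1)`), whose rows are indexed by the
pair `(i_ℓ, j_ℓ)` and whose columns are indexed by all remaining pairs, has matrix rank
exactly 2; hence the Tucker rank of `Δ_d` equals `(2,…,2)`. -/
theorem discrete_laplacian_tucker_unfolding_rank_eq_two
    (d N : ℕ) (hd : 2 ≤ d) (hN : 2 ≤ N)
    (A : Matrix (Fin N) (Fin N) ℝ)
    (hA : ∀ i j : Fin N, A i j =
      if (i : ℕ) = (j : ℕ) then 2
      else if (i : ℕ) + 1 = (j : ℕ) ∨ (j : ℕ) + 1 = (i : ℕ) then -1 else 0)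
    (Δ : Matrix (Fin d → Fin N) (Fin d → Fin N) ℝ)
    (hΔ : ∀ i j, Δ i j = ∑ ℓ : Fin d, A (i ℓ) (j ℓ) *
      ∏ k ∈ Finset.univ.erase ℓ, (if i k = j k then (1 : ℝ) else 0))
    (ℓ : Fin d)
    (V : Matrix (Fin N × Fin N)
        (({k : Fin d // k ≠ ℓ} → Fin N) × ({k : Fin d // k ≠ ℓ} → Fin N)) ℝ)
    (hV : ∀ a b, V a b =
      Δ (insertIdx ℓ a.1 b.1) (insertIdx ℓ a.2 b.2)) :
    V.rank = 2 := by
  obtain ⟨z, hz⟩ : ∃ z : Fin N, (z : ℕ) = 0 := ⟨⟨0, by omega⟩, rfl⟩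
  obtain ⟨o, ho⟩ : ∃ o : Fin N, (o : ℕ) = 1 := ⟨⟨1, by omega⟩, rfl⟩
  have hzo : z ≠ o := by
    intro h; rw [Fin.ext_iff, hz, ho] at h; exact absurd h (by norm_num)
  have hAzz : A z z = 2 := by rw [hA]; simp
  have hAzo : A z o = -1 := by rw [hA, hz, ho]; norm_num
  -- the rank-2 decomposition
  have hdec : ∀ a b, V a b =
      A a.1 a.2 * gcol ℓ z b + (if a.1 = a.2 then (1 : ℝ) else 0) * hcol ℓ A z b := by
    intro a b
    rw [hV, hΔ, ← Finset.add_sum_erase _ _ (Finset.mem_univ ℓ)]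
    congr 1
    · have e1 : insertIdx ℓ a.1 b.1 ℓ = a.1 := by simp [insertIdx]
      have e2 : insertIdx ℓ a.2 b.2 ℓ = a.2 := by simp [insertIdx]
      rw [e1, e2, gcol]
      congr 1
      refine Finset.prod_congr rfl fun k hk => ?_
      have hk' : k ≠ ℓ := (Finset.mem_erase.mp hk).1
      simp [insertIdx, hk']
    · rw [hcol, Finset.mul_sum]
      refine Finset.sum_congr rfl fun m hm => ?_
      have hm' : m ≠ ℓ := (Finset.mem_erase.mp hm).1
      have hℓm : ℓ ∈ Finset.univ.erase m :=
        Finset.mem_erase.mpr ⟨Ne.symm hm', Finset.mem_univ ℓ⟩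
      rw [← Finset.mul_prod_erase _ _ hℓm]
      have e1 : insertIdx ℓ a.1 b.1 ℓ = a.1 := by simp [insertIdx]
      have e2 : insertIdx ℓ a.2 b.2 ℓ = a.2 := by simp [insertIdx]
      have e3 : insertIdx ℓ a.1 b.1 m = insertIdx ℓ z b.1 m := by simp [insertIdx, hm']
      have e4 : insertIdx ℓ a.2 b.2 m = insertIdx ℓ z b.2 m := by simp [insertIdx, hm']
      have e5 : ∏ k ∈ (Finset.univ.erase m).erase ℓ,
          (if insertIdx ℓ a.1 b.1 k = insertIdx ℓ a.2 b.2 k then (1 : ℝ) else 0) =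
          ∏ k ∈ (Finset.univ.erase m).erase ℓ,
          (if insertIdx ℓ z b.1 k = insertIdx ℓ z b.2 k then (1 : ℝ) else 0) := by
        refine Finset.prod_congr rfl fun k hk => ?_
        have hk' : k ≠ ℓ := (Finset.mem_erase.mp hk).1
        simp [insertIdx, hk']
      rw [e1, e2, e3, e4, e5]
      ring
  -- upper bound
  have hub : V.rank ≤ 2 := by
    have hFG : V = (Matrix.of fun a (t : Fin 2) =>
          if t = 0 then A a.1 a.2 else if a.1 = a.2 then (1 : ℝ) else 0) *
        (Matrix.of fun (t : Fin 2) b => if t = 0 then gcol ℓ z b else hcol ℓ A z b) := by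
      ext a b
      rw [Matrix.mul_apply, Fin.sum_univ_two, hdec a b]
      simp
    calc V.rank ≤ Fintype.card (Fin 2) := by
          rw [hFG]
          exact le_trans (Matrix.rank_mul_le_left _ _) (Matrix.rank_le_card_width _)
      _ = 2 := by simp
  -- lower bound
  obtain ⟨m, hm⟩ : ∃ m : Fin d, m ≠ ℓ :=
    Fintype.exists_ne_of_one_lt_card (by simpa using by omega) ℓ
  -- the two columns
  set c0 : ({k : Fin d // k ≠ ℓ} → Fin N) × ({k : Fin d // k ≠ ℓ} → Fin N) :=
    ((fun _ => z), (fun _ => z)) with hc0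
  set c1 : ({k : Fin d // k ≠ ℓ} → Fin N) × ({k : Fin d // k ≠ ℓ} → Fin N) :=
    ((fun _ => z), (fun k => if (k : Fin d) = m then o else z)) with hc1
  have hg1c0 : gcol ℓ z c0 = 1 := by
    rw [gcol]
    refine Finset.prod_eq_one fun k hk => ?_
    simp [hc0, insertIdx]
  have hg1c1 : gcol ℓ z c1 = 0 := by
    rw [gcol]
    refine Finset.prod_eq_zero (Finset.mem_erase.mpr ⟨hm, Finset.mem_univ m⟩) ?_
    simp [hc1, insertIdx, hm, hzo]
  have hg2c1 : hcol ℓ A z c1 = -1 := by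
    rw [hcol]
    rw [Finset.sum_eq_single_of_mem m (Finset.mem_erase.mpr ⟨hm, Finset.mem_univ m⟩)]
    · have e3 : insertIdx ℓ z c1.1 m = z := by simp [hc1, insertIdx, hm]
      have e4 : insertIdx ℓ z c1.2 m = o := by simp [hc1, insertIdx, hm]
      rw [e3, e4, hAzo]
      have : ∏ k ∈ (Finset.univ.erase m).erase ℓ,
          (if insertIdx ℓ z c1.1 k = insertIdx ℓ z c1.2 k then (1 : ℝ) else 0) = 1 := by
        refine Finset.prod_eq_one fun k hk => ?_
        have hk1 : k ≠ ℓ := (Finset.mem_erase.mp hk).1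
        have hk2 : k ≠ m := (Finset.mem_erase.mp (Finset.mem_erase.mp hk).2).1
        simp [hc1, insertIdx, hk1, hk2]
      rw [this]; ring
    · intro m' hm' hne
      have : ∏ k ∈ (Finset.univ.erase m').erase ℓ,
          (if insertIdx ℓ z c1.1 k = insertIdx ℓ z c1.2 k then (1 : ℝ) else 0) = 0 := by
        refine Finset.prod_eq_zero (Finset.mem_erase.mpr ⟨hm,
          Finset.mem_erase.mpr ⟨fun h => hne h.symm, Finset.mem_univ m⟩⟩) ?_
        simp [hc1, insertIdx, hm, hzo]
      rw [this, mul_zero]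
  -- selection matrices
  set P : Matrix (Fin 2) (Fin N × Fin N) ℝ :=
    Matrix.of fun t a => if a = (![(z, z), (z, o)]) t then (1 : ℝ) else 0 with hP
  set Q : Matrix (({k : Fin d // k ≠ ℓ} → Fin N) × ({k : Fin d // k ≠ ℓ} → Fin N))
      (Fin 2) ℝ := Matrix.of fun b t => if b = (![c0, c1]) t then (1 : ℝ) else 0 with hQ
  have hM : ∀ t s : Fin 2, (P * V * Q) t s = V ((![(z, z), (z, o)]) t) ((![c0, c1]) s) := by
    intro t s
    rw [Matrix.mul_apply]
    have : ∀ b, (P * V) t b * Q b s = if b = (![c0, c1]) s then (P * V) t b else 0 := by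
      intro b; rw [hQ]; simp [Matrix.of_apply]
    rw [Finset.sum_congr rfl fun b _ => this b, Finset.sum_ite_eq' Finset.univ _ _]
    simp only [Finset.mem_univ, if_true]
    rw [Matrix.mul_apply]
    have : ∀ a, P t a * V a ((![c0, c1]) s) =
        if a = (![(z, z), (z, o)]) t then V a ((![c0, c1]) s) else 0 := by
      intro a; rw [hP]; simp [Matrix.of_apply]
    rw [Finset.sum_congr rfl fun a _ => this a, Finset.sum_ite_eq' Finset.univ _ _]
    simp
  have hlb : 2 ≤ V.rank := by
    have hdet : (P * V * Q).det ≠ 0 := by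
      rw [Matrix.det_fin_two, hM, hM, hM, hM]
      simp only [Matrix.cons_val_zero, Matrix.cons_val_one, Matrix.head_cons]
      rw [hdec, hdec, hdec, hdec, hg1c0, hg1c1, hg2c1, hAzz, hAzo]
      simp [hzo]
    have h2 : (P * V * Q).rank = 2 := by
      rw [Matrix.rank_of_isUnit _ ((Matrix.isUnit_iff_isUnit_det _).mpr
        (isUnit_iff_ne_zero.mpr hdet))]
      simp
    calc (2 : ℕ) = (P * V * Q).rank := h2.symm
      _ ≤ (P * V).rank := Matrix.rank_mul_le_left _ _
      _ ≤ V.rank := Matrix.rank_mul_le_right _ _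
  omega
end

section
/- For every s > 0 there exist constants c > 0 and c_1 > 0 such that for every natural number p and every real λ ≥ 0, one has e^{−λ s} · (λ/(λ+1))^{p} ≤ c · e^{−c_1 √p}. -/
/-- Key variational estimate for the Cayley transform: for every `s > 0` there are
`c, c₁ > 0` such that `e^{−λs} (λ/(λ+1))^p ≤ c e^{−c₁ √p}` for all `p ∈ ℕ` and `λ ≥ 0`. -/
theorem cayley_symbol_decay
    (s : ℝ) (hs : 0 < s) :
    ∃ c c₁ : ℝ, 0 < c ∧ 0 < c₁ ∧
      ∀ (p : ℕ) (l : ℝ), 0 ≤ l →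
        Real.exp (-l * s) * (l / (l + 1)) ^ p ≤ c * Real.exp (-c₁ * Real.sqrt p) := by
  set c₁ : ℝ := min s 1 / 2 with hc₁def
  have hc₁ : 0 < c₁ := by positivity
  have hc₁le : c₁ ≤ 1 / 2 := by
    have := min_le_right s 1
    simp only [hc₁def]; linarith
  have hc₁s : c₁ ≤ s / 2 := by
    have := min_le_left s 1
    simp only [hc₁def]; linarith
  refine ⟨1, c₁, one_pos, hc₁, ?_⟩
  intro p l hl
  have hl1 : (0:ℝ) < l + 1 := by linarith
  have hfrac0 : 0 ≤ l / (l + 1) := div_nonneg hl hl1.le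
  have hfrac1 : l / (l + 1) ≤ 1 := by
    rw [div_le_one hl1]; linarith
  rcases Nat.eq_zero_or_pos p with hp | hp
  · subst hp
    simp only [pow_zero, mul_one, Nat.cast_zero, Real.sqrt_zero, mul_zero,
      Real.exp_zero, one_mul]
    exact Real.exp_le_one_iff.mpr (by nlinarith)
  have hsp1 : 1 ≤ Real.sqrt p := by
    rw [show (1:ℝ) = Real.sqrt 1 by simp]
    exact Real.sqrt_le_sqrt (by exact_mod_cast hp)
  have hsp0 : 0 < Real.sqrt p := lt_of_lt_of_le one_pos hsp1
  by_cases hcase : c₁ * Real.sqrt p ≤ l * s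
  · have h1 : Real.exp (-l * s) ≤ Real.exp (-c₁ * Real.sqrt p) := by
      apply Real.exp_le_exp.mpr; nlinarith
    calc Real.exp (-l * s) * (l / (l + 1)) ^ p
        ≤ Real.exp (-l * s) * 1 := by
          exact mul_le_mul_of_nonneg_left (pow_le_one₀ hfrac0 hfrac1) (Real.exp_nonneg _)
      _ = Real.exp (-l * s) := mul_one _
      _ ≤ Real.exp (-c₁ * Real.sqrt p) := h1
      _ = 1 * Real.exp (-c₁ * Real.sqrt p) := (one_mul _).symm
  · push_neg at hcase
    -- l < c₁ √p / s, so l + 1 ≤ √p / c₁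
    have hlb : l + 1 ≤ Real.sqrt p / c₁ := by
      have h1 : l ≤ c₁ * Real.sqrt p / s := by
        rw [le_div_iff₀ hs]; linarith
      have h2 : c₁ * Real.sqrt p / s ≤ Real.sqrt p / (2 * c₁) := by
        rw [div_le_div_iff₀ hs (by positivity)]
        nlinarith [mul_le_mul hc₁le hc₁s hc₁.le (by norm_num : (0:ℝ) ≤ 1/2),
          hsp1, hsp0.le, mul_le_mul_of_nonneg_right hc₁s hsp0.le,
          mul_le_mul_of_nonneg_right hc₁le hsp0.le]
      have h3 : (1:ℝ) ≤ Real.sqrt p / (2 * c₁) := by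
        rw [le_div_iff₀ (by positivity)]; nlinarith
      have : Real.sqrt p / (2 * c₁) + Real.sqrt p / (2 * c₁) = Real.sqrt p / c₁ := by
        field_simp; ring
      linarith
    have hinv : c₁ / Real.sqrt p ≤ 1 / (l + 1) := by
      rw [div_le_div_iff₀ hsp0 hl1]
      calc c₁ * (l + 1) ≤ c₁ * (Real.sqrt p / c₁) :=
            mul_le_mul_of_nonneg_left hlb hc₁.le
        _ = Real.sqrt p := by field_simp
        _ = 1 * Real.sqrt p := (one_mul _).symm
    have hkey : c₁ * Real.sqrt p ≤ (p : ℝ) / (l + 1) := by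
      have hps : Real.sqrt p * Real.sqrt p = (p : ℝ) :=
        Real.mul_self_sqrt (Nat.cast_nonneg p)
      have := mul_le_mul_of_nonneg_left hinv (le_of_lt (by positivity : (0:ℝ) < (p:ℝ)))
      calc c₁ * Real.sqrt p = (p : ℝ) * (c₁ / Real.sqrt p) := by
            field_simp; nlinarith
        _ ≤ (p : ℝ) * (1 / (l + 1)) := this
        _ = (p : ℝ) / (l + 1) := by ring
    have hstep : l / (l + 1) ≤ Real.exp (-(1 / (l + 1))) := by
      have h := Real.add_one_le_exp (-(1 / (l + 1)))
      have : l / (l + 1) = -(1 / (l + 1)) + 1 := by field_simp; ring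
      linarith
    have hpow : (l / (l + 1)) ^ p ≤ Real.exp (-(1 / (l + 1))) ^ p :=
      pow_le_pow_left₀ hfrac0 hstep p
    have hexp : Real.exp (-(1 / (l + 1))) ^ p = Real.exp (-((p : ℝ) / (l + 1))) := by
      rw [← Real.exp_nat_mul]; ring_nf
    have hfin : (l / (l + 1)) ^ p ≤ Real.exp (-c₁ * Real.sqrt p) := by
      rw [hexp] at hpow
      refine hpow.trans (Real.exp_le_exp.mpr ?_)
      linarith
    calc Real.exp (-l * s) * (l / (l + 1)) ^ p
        ≤ 1 * (l / (l + 1)) ^ p := by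
          exact mul_le_mul_of_nonneg_right
            (Real.exp_le_one_iff.mpr (by nlinarith)) (pow_nonneg hfrac0 p)
      _ = (l / (l + 1)) ^ p := one_mul _
      _ ≤ Real.exp (-c₁ * Real.sqrt p) := hfin
      _ = 1 * Real.exp (-c₁ * Real.sqrt p) := (one_mul _).symm
end

section
/- Let s > 0, λ_0 > 0, let (λ_k)_{k∈ℕ} be a sequence of reals with λ_k ≥ λ_0 for all k, and let (a_k)_{k∈ℕ} be a sequence of reals such that for every n ∈ ℕ the sequence (a_k λ_k^n)_k lies in ℓ²(ℕ) and the sum B := Σ_{n=0}^{∞} (s^n / n!) · ‖(a_k λ_k^n)_k‖_{ℓ²} is finite. Then there exist constants c > 0 and c_1 > 0 depending only on s (not on the sequences, on λ_0, or on p) such that for every natural number p: ‖( a_k · (λ_k/(λ_k+1))^{p} )_k‖_{ℓ²} ≤ c · e^{−c_1 √p} · B. -/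
private lemma sqrt_add_le' {x y : ℝ} (hx : 0 ≤ x) (hy : 0 ≤ y) :
    Real.sqrt (x + y) ≤ Real.sqrt x + Real.sqrt y := by
  have h : x + y ≤ (Real.sqrt x + Real.sqrt y) ^ 2 := by
    have hx' := Real.sq_sqrt hx
    have hy' := Real.sq_sqrt hy
    nlinarith [Real.sqrt_nonneg x, Real.sqrt_nonneg y]
  calc Real.sqrt (x + y) ≤ Real.sqrt ((Real.sqrt x + Real.sqrt y) ^ 2) :=
        Real.sqrt_le_sqrt h
    _ = Real.sqrt x + Real.sqrt y := Real.sqrt_sq (by positivity)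

private lemma pointwise_split (a lam M : ℝ) (hlam : 0 < lam) (hM : 0 < M) (p n : ℕ) :
    (a * (lam / (lam + 1)) ^ p) ^ 2 ≤
      Real.exp (-(p : ℝ) / (M + 1)) ^ 2 * a ^ 2 + (M⁻¹ ^ n) ^ 2 * (a * lam ^ n) ^ 2 := by
  rcases le_total lam M with h | h
  · -- small lambda case
    have h1 : 0 ≤ lam / (lam + 1) := by positivity
    have h2 : lam / (lam + 1) ≤ Real.exp (-(1 / (M + 1))) := by
      have he : 1 - 1 / (lam + 1) ≤ Real.exp (-(1 / (lam + 1))) := by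
        have := Real.add_one_le_exp (-(1 / (lam + 1))); linarith
      have heq : lam / (lam + 1) = 1 - 1 / (lam + 1) := by field_simp; ring
      have hmono : Real.exp (-(1 / (lam + 1))) ≤ Real.exp (-(1 / (M + 1))) := by
        apply Real.exp_le_exp.mpr
        have : 1 / (M + 1) ≤ 1 / (lam + 1) := by
          apply one_div_le_one_div_of_le <;> linarith
        linarith
      rw [heq]; linarith
    have h3 : (lam / (lam + 1)) ^ p ≤ Real.exp (-(1 / (M + 1))) ^ p :=
      pow_le_pow_left₀ h1 h2 p
    have h4 : Real.exp (-(1 / (M + 1))) ^ p = Real.exp (-(p : ℝ) / (M + 1)) := by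
      rw [← Real.exp_nat_mul]; ring_nf
    have h5 : (a * (lam / (lam + 1)) ^ p) ^ 2 ≤ Real.exp (-(p : ℝ) / (M + 1)) ^ 2 * a ^ 2 := by
      rw [mul_pow]
      have : ((lam / (lam + 1)) ^ p) ^ 2 ≤ Real.exp (-(p : ℝ) / (M + 1)) ^ 2 := by
        apply pow_le_pow_left₀ (by positivity)
        rw [← h4]; exact h3
      nlinarith [sq_nonneg a]
    nlinarith [sq_nonneg (M⁻¹ ^ n * (a * lam ^ n))]
  · -- large lambda case
    have h1 : 0 ≤ lam / (lam + 1) := by positivity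
    have h2 : lam / (lam + 1) ≤ 1 := by
      rw [div_le_one (by linarith)]; linarith
    have h3 : (lam / (lam + 1)) ^ p ≤ 1 := pow_le_one₀ h1 h2
    have ht : 0 ≤ (lam / (lam + 1)) ^ p := pow_nonneg h1 p
    have h4 : (a * (lam / (lam + 1)) ^ p) ^ 2 ≤ a ^ 2 := by
      nlinarith [sq_nonneg a, mul_nonneg (sq_nonneg a) ht]
    have h5 : a ^ 2 ≤ (M⁻¹ ^ n) ^ 2 * (a * lam ^ n) ^ 2 := by
      have hMlam : (1 : ℝ) ≤ lam / M := (one_le_div hM).mpr h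
      have : (1 : ℝ) ≤ (lam / M) ^ (2 * n) := one_le_pow₀ hMlam
      have heq : (M⁻¹ ^ n) ^ 2 * (a * lam ^ n) ^ 2 = a ^ 2 * (lam / M) ^ (2 * n) := by
        field_simp
        ring
      rw [heq]
      nlinarith [sq_nonneg a]
    nlinarith [sq_nonneg (Real.exp (-(p : ℝ) / (M + 1)) * a)]

private lemma l2_split (lam : ℕ → ℝ) (hl : ∀ k, 0 < lam k) (a : ℕ → ℝ)
    (hS : ∀ n : ℕ, Summable fun k => (a k * lam k ^ n) ^ 2) (M : ℝ) (hM : 0 < M) (p n : ℕ) :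
    Real.sqrt (∑' k : ℕ, (a k * (lam k / (lam k + 1)) ^ p) ^ 2) ≤
      Real.exp (-(p : ℝ) / (M + 1)) * Real.sqrt (∑' k : ℕ, (a k * lam k ^ 0) ^ 2)
        + M⁻¹ ^ n * Real.sqrt (∑' k : ℕ, (a k * lam k ^ n) ^ 2) := by
  set E := Real.exp (-(p : ℝ) / (M + 1)) with hE
  have hE0 : 0 ≤ E := Real.exp_nonneg _
  have hS0 : Summable fun k => (a k) ^ 2 := by simpa using hS 0
  have hptw : ∀ k, (a k * (lam k / (lam k + 1)) ^ p) ^ 2 ≤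
      E ^ 2 * (a k) ^ 2 + (M⁻¹ ^ n) ^ 2 * (a k * lam k ^ n) ^ 2 :=
    fun k => pointwise_split (a k) (lam k) M (hl k) hM p n
  have hRS : Summable fun k => E ^ 2 * (a k) ^ 2 + (M⁻¹ ^ n) ^ 2 * (a k * lam k ^ n) ^ 2 :=
    (hS0.mul_left _).add ((hS n).mul_left _)
  have hLS : Summable fun k => (a k * (lam k / (lam k + 1)) ^ p) ^ 2 :=
    Summable.of_nonneg_of_le (fun k => sq_nonneg _) hptw hRS
  have htsum : (∑' k : ℕ, (a k * (lam k / (lam k + 1)) ^ p) ^ 2) ≤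
      E ^ 2 * (∑' k : ℕ, (a k) ^ 2) + (M⁻¹ ^ n) ^ 2 * ∑' k : ℕ, (a k * lam k ^ n) ^ 2 := by
    calc (∑' k : ℕ, (a k * (lam k / (lam k + 1)) ^ p) ^ 2)
        ≤ ∑' k : ℕ, (E ^ 2 * (a k) ^ 2 + (M⁻¹ ^ n) ^ 2 * (a k * lam k ^ n) ^ 2) :=
          Summable.tsum_le_tsum hptw hLS hRS
      _ = E ^ 2 * (∑' k : ℕ, (a k) ^ 2) + (M⁻¹ ^ n) ^ 2 * ∑' k : ℕ, (a k * lam k ^ n) ^ 2 := by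
          rw [Summable.tsum_add (hS0.mul_left _) ((hS n).mul_left _), tsum_mul_left, tsum_mul_left]
  have h0 : (0:ℝ) ≤ ∑' k : ℕ, (a k) ^ 2 := tsum_nonneg fun k => sq_nonneg _
  have hn : (0:ℝ) ≤ ∑' k : ℕ, (a k * lam k ^ n) ^ 2 := tsum_nonneg fun k => sq_nonneg _
  calc Real.sqrt (∑' k : ℕ, (a k * (lam k / (lam k + 1)) ^ p) ^ 2)
      ≤ Real.sqrt (E ^ 2 * (∑' k : ℕ, (a k) ^ 2)
          + (M⁻¹ ^ n) ^ 2 * ∑' k : ℕ, (a k * lam k ^ n) ^ 2) := Real.sqrt_le_sqrt htsum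
    _ ≤ Real.sqrt (E ^ 2 * (∑' k : ℕ, (a k) ^ 2))
          + Real.sqrt ((M⁻¹ ^ n) ^ 2 * ∑' k : ℕ, (a k * lam k ^ n) ^ 2) :=
        sqrt_add_le' (by positivity) (by positivity)
    _ = E * Real.sqrt (∑' k : ℕ, (a k) ^ 2)
          + M⁻¹ ^ n * Real.sqrt (∑' k : ℕ, (a k * lam k ^ n) ^ 2) := by
        rw [Real.sqrt_mul (sq_nonneg E), Real.sqrt_mul (sq_nonneg (M⁻¹ ^ n)),
          Real.sqrt_sq hE0, Real.sqrt_sq (by positivity)]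
    _ = Real.exp (-(p : ℝ) / (M + 1)) * Real.sqrt (∑' k : ℕ, (a k * lam k ^ 0) ^ 2)
          + M⁻¹ ^ n * Real.sqrt (∑' k : ℕ, (a k * lam k ^ n) ^ 2) := by
        simp [hE]

/-- Exponential decay of Cayley-transform iterates of an `H`-analytic vector: if
`λ_k ≥ λ₀ > 0`, the sequences `(a_k λ_k^n)_k` are square-summable and
`B = Σ_n (s^n/n!) ‖(a_k λ_k^n)_k‖_{ℓ²}` is finite, then
`‖(a_k (λ_k/(λ_k+1))^p)_k‖_{ℓ²} ≤ c e^{−c₁√p} B` with constants `c, c₁ > 0` depending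
only on `s`. -/
theorem cayley_iterates_l2_decay
    (s : ℝ) (hs : 0 < s) :
    ∃ c c₁ : ℝ, 0 < c ∧ 0 < c₁ ∧
      ∀ (lam0 : ℝ), 0 < lam0 →
      ∀ (lam : ℕ → ℝ), (∀ k, lam0 ≤ lam k) →
      ∀ (a : ℕ → ℝ),
        (∀ n : ℕ, Summable (fun k => (a k * lam k ^ n) ^ 2)) →
        Summable (fun n : ℕ => s ^ n / (n.factorial : ℝ) *
          Real.sqrt (∑' k : ℕ, (a k * lam k ^ n) ^ 2)) →
        ∀ p : ℕ,
          Real.sqrt (∑' k : ℕ, (a k * (lam k / (lam k + 1)) ^ p) ^ 2) ≤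
            c * Real.exp (-c₁ * Real.sqrt p) *
              ∑' n : ℕ, s ^ n / (n.factorial : ℝ) *
                Real.sqrt (∑' k : ℕ, (a k * lam k ^ n) ^ 2) := by
  refine ⟨1 + Real.exp 1, min (1/2) (s / Real.exp 1), by positivity,
    lt_min (by norm_num) (by positivity), ?_⟩
  intro lam0 hlam0 lam hlam a hS hB p
  have hl : ∀ k, 0 < lam k := fun k => lt_of_lt_of_le hlam0 (hlam k)
  set c₁ : ℝ := min (1/2) (s / Real.exp 1) with hc₁def
  set B : ℝ := ∑' n : ℕ, s ^ n / (n.factorial : ℝ) *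
    Real.sqrt (∑' k : ℕ, (a k * lam k ^ n) ^ 2) with hBdef
  have hterm_nonneg : ∀ n : ℕ, 0 ≤ s ^ n / (n.factorial : ℝ) *
      Real.sqrt (∑' k : ℕ, (a k * lam k ^ n) ^ 2) := by
    intro n; positivity
  have hB0 : 0 ≤ B := tsum_nonneg hterm_nonneg
  have hA : ∀ n : ℕ, s ^ n / (n.factorial : ℝ) *
      Real.sqrt (∑' k : ℕ, (a k * lam k ^ n) ^ 2) ≤ B :=
    fun n => Summable.le_tsum hB n fun m _ => hterm_nonneg m
  have hA0 : Real.sqrt (∑' k : ℕ, (a k * lam k ^ 0) ^ 2) ≤ B := by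
    have := hA 0; simpa using this
  have hc₁half : c₁ ≤ 1/2 := min_le_left _ _
  have hc₁se : c₁ ≤ s / Real.exp 1 := min_le_right _ _
  have hc₁pos : 0 < c₁ := lt_min (by norm_num) (by positivity)
  rcases Nat.eq_zero_or_pos p with hp | hp
  · -- p = 0
    subst hp
    have hlhs : Real.sqrt (∑' k : ℕ, (a k * (lam k / (lam k + 1)) ^ 0) ^ 2) ≤ B := by
      simpa using hA0
    have hone : Real.exp (-c₁ * Real.sqrt ((0:ℕ):ℝ)) = 1 := by
      norm_num
    rw [hone]
    nlinarith [Real.exp_pos 1, hB0, hlhs]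
  · -- p ≥ 1
    set M : ℝ := Real.sqrt p with hMdef
    have hM1 : (1:ℝ) ≤ M := by
      rw [hMdef, show (1:ℝ) = Real.sqrt 1 by simp]
      exact Real.sqrt_le_sqrt (by exact_mod_cast hp)
    have hMpos : 0 < M := lt_of_lt_of_le one_pos hM1
    have hMsq : M ^ 2 = (p : ℝ) := Real.sq_sqrt (by positivity)
    set n : ℕ := ⌊s * M / Real.exp 1⌋₊ with hndef
    have key := l2_split lam hl a hS M hMpos p n
    have hcM : c₁ * M ≤ s * M / Real.exp 1 := by
      have h := mul_le_mul_of_nonneg_right hc₁se (le_of_lt hMpos)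
      calc c₁ * M ≤ s / Real.exp 1 * M := h
        _ = s * M / Real.exp 1 := by ring
    -- bound the first term
    have hEbound : Real.exp (-(p : ℝ) / (M + 1)) ≤ Real.exp (-c₁ * M) := by
      apply Real.exp_le_exp.mpr
      have h2M : M + 1 ≤ 2 * M := by linarith
      have hhalf : M / 2 ≤ (p : ℝ) / (M + 1) := by
        rw [div_le_div_iff₀ (by norm_num) (by linarith)]
        nlinarith
      have hcM2 : c₁ * M ≤ M / 2 := by nlinarith
      have hneg : -(p:ℝ) / (M + 1) = -((p:ℝ) / (M + 1)) := by ring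
      rw [hneg]
      linarith
    -- bound the second term
    have hsecond : M⁻¹ ^ n * Real.sqrt (∑' k : ℕ, (a k * lam k ^ n) ^ 2) ≤
        Real.exp 1 * Real.exp (-c₁ * M) * B := by
      have hpos : (0:ℝ) < s ^ n / (n.factorial : ℝ) := by positivity
      have hAn : Real.sqrt (∑' k : ℕ, (a k * lam k ^ n) ^ 2) ≤
          (n.factorial : ℝ) / s ^ n * B := by
        have h2 : Real.sqrt (∑' k : ℕ, (a k * lam k ^ n) ^ 2) * (s ^ n / (n.factorial : ℝ))
            ≤ B := by rw [mul_comm]; exact hA n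
        have h3 : Real.sqrt (∑' k : ℕ, (a k * lam k ^ n) ^ 2) ≤
            B / (s ^ n / (n.factorial : ℝ)) := (le_div_iff₀ hpos).mpr h2
        calc Real.sqrt (∑' k : ℕ, (a k * lam k ^ n) ^ 2)
            ≤ B / (s ^ n / (n.factorial : ℝ)) := h3
          _ = (n.factorial : ℝ) / s ^ n * B := by
              rw [div_div_eq_mul_div]; ring
      have hMn : (0:ℝ) ≤ M⁻¹ ^ n := by positivity
      have step1 : M⁻¹ ^ n * Real.sqrt (∑' k : ℕ, (a k * lam k ^ n) ^ 2) ≤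
          M⁻¹ ^ n * ((n.factorial : ℝ) / s ^ n * B) :=
        mul_le_mul_of_nonneg_left hAn hMn
      have hfac : M⁻¹ ^ n * ((n.factorial : ℝ) / s ^ n) ≤ Real.exp 1 * Real.exp (-c₁ * M) := by
        rcases Nat.eq_zero_or_pos n with hn0 | hn1
        · -- n = 0 : s*M/e < 1
          have hsM1 : s * M / Real.exp 1 < 1 := by
            by_contra hcon
            push_neg at hcon
            have h1n : (1:ℕ) ≤ ⌊s * M / Real.exp 1⌋₊ :=
              Nat.le_floor (by exact_mod_cast hcon)
            rw [← hndef] at h1n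
            omega
          have hgoal : (1:ℝ) ≤ Real.exp 1 * Real.exp (-c₁ * M) := by
            have h1 : c₁ * M < 1 := lt_of_le_of_lt hcM hsM1
            have h2 : Real.exp (-1:ℝ) ≤ Real.exp (-c₁ * M) :=
              Real.exp_le_exp.mpr (by linarith)
            have hinv : Real.exp 1 * Real.exp (-1:ℝ) = 1 := by
              rw [← Real.exp_add]; norm_num
            nlinarith [Real.exp_pos 1]
          rw [hn0]
          simpa using hgoal
        · -- n ≥ 1
          have hnle : (n : ℝ) ≤ s * M / Real.exp 1 := Nat.floor_le (by positivity)
          have hngt : s * M / Real.exp 1 < (n : ℝ) + 1 := by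
            have := Nat.lt_floor_add_one (s * M / Real.exp 1)
            rw [← hndef] at this
            exact_mod_cast this
          have hfact : (n.factorial : ℝ) ≤ (n : ℝ) ^ n := by
            exact_mod_cast Nat.factorial_le_pow n
          have hsM : (0:ℝ) < s * M := by positivity
          have h1 : M⁻¹ ^ n * ((n.factorial : ℝ) / s ^ n) = (n.factorial : ℝ) / (s * M) ^ n := by
            rw [mul_pow, div_mul_eq_div_div, div_eq_mul_inv ((n.factorial : ℝ) / s ^ n),
              inv_pow, mul_comm]
          have h2 : (n.factorial : ℝ) / (s * M) ^ n ≤ ((n : ℝ) / (s * M)) ^ n := by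
            rw [div_pow]
            gcongr
          have h3 : (n : ℝ) / (s * M) ≤ (Real.exp 1)⁻¹ := by
            calc (n : ℝ) / (s * M) ≤ (s * M / Real.exp 1) / (s * M) := by gcongr
              _ = (Real.exp 1)⁻¹ := by field_simp
          have h4 : ((n : ℝ) / (s * M)) ^ n ≤ ((Real.exp 1)⁻¹) ^ n :=
            pow_le_pow_left₀ (by positivity) h3 n
          have h5 : ((Real.exp 1)⁻¹) ^ n = Real.exp (-(n:ℝ)) := by
            rw [← Real.exp_neg, ← Real.exp_nat_mul]; ring_nf
          have h6 : Real.exp (-(n:ℝ)) ≤ Real.exp 1 * Real.exp (-c₁ * M) := by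
            rw [← Real.exp_add]
            apply Real.exp_le_exp.mpr
            linarith
          calc M⁻¹ ^ n * ((n.factorial : ℝ) / s ^ n)
              = (n.factorial : ℝ) / (s * M) ^ n := h1
            _ ≤ ((n : ℝ) / (s * M)) ^ n := h2
            _ ≤ ((Real.exp 1)⁻¹) ^ n := h4
            _ = Real.exp (-(n:ℝ)) := h5
            _ ≤ Real.exp 1 * Real.exp (-c₁ * M) := h6
      calc M⁻¹ ^ n * Real.sqrt (∑' k : ℕ, (a k * lam k ^ n) ^ 2)
          ≤ M⁻¹ ^ n * ((n.factorial : ℝ) / s ^ n * B) := step1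
        _ = M⁻¹ ^ n * ((n.factorial : ℝ) / s ^ n) * B := by ring
        _ ≤ Real.exp 1 * Real.exp (-c₁ * M) * B :=
            mul_le_mul_of_nonneg_right hfac hB0
    have hfirst : Real.exp (-(p : ℝ) / (M + 1)) *
        Real.sqrt (∑' k : ℕ, (a k * lam k ^ 0) ^ 2) ≤ Real.exp (-c₁ * M) * B :=
      mul_le_mul hEbound hA0 (Real.sqrt_nonneg _) (Real.exp_nonneg _)
    calc Real.sqrt (∑' k : ℕ, (a k * (lam k / (lam k + 1)) ^ p) ^ 2)
        ≤ Real.exp (-(p : ℝ) / (M + 1)) * Real.sqrt (∑' k : ℕ, (a k * lam k ^ 0) ^ 2)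
            + M⁻¹ ^ n * Real.sqrt (∑' k : ℕ, (a k * lam k ^ n) ^ 2) := key
      _ ≤ Real.exp (-c₁ * M) * B + Real.exp 1 * Real.exp (-c₁ * M) * B :=
          add_le_add hfirst hsecond
      _ = (1 + Real.exp 1) * Real.exp (-c₁ * M) * B := by ring
      _ = (1 + Real.exp 1) * Real.exp (-c₁ * Real.sqrt p) * B := by rw [hMdef]
end

section
/- Let p be a real polynomial of degree at most m, let A, B be positive integers and let c be a real number. Then the A×B real matrix M with entries M(a,b) = p(a + c·b), for a ∈ {0,…,A−1} and b ∈ {0,…,B−1}, has matrix rank at most m+1. In particular, for N = q^L, every TT-unfolding matrix [p(a + q^s b)]_{a ∈ Fin q^s, b ∈ Fin q^{L−s}} of the q-adically folded polynomial vector (p(n))_{n=0}^{N−1} has rank at most m+1, so the QTT-rank of a sampled polynomial of degree m is at most m+1, uniformly in the vector size N. -/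
/-- A matrix sampled from a polynomial of degree at most `m` along `a + c·b` has rank at
most `m + 1`; in particular every TT-unfolding matrix of the `q`-adically folded
polynomial vector `(p(n))_{n<q^L}` has rank at most `m + 1`, so the QTT-rank of a sampled
polynomial of degree `m` is at most `m + 1`, uniformly in the vector size. -/
theorem polynomial_matrix_rank_le
    (p : Polynomial ℝ) (m : ℕ) (hm : p.natDegree ≤ m)
    (A B : ℕ) (hA : 0 < A) (hB : 0 < B) (c : ℝ)
    (M : Matrix (Fin A) (Fin B) ℝ)
    (hM : ∀ a b, M a b = p.eval ((a : ℝ) + c * (b : ℝ))) :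
    M.rank ≤ m + 1 := by
  set U : Matrix (Fin A) (Fin (m+1)) ℝ := fun a i => (a : ℝ) ^ (i : ℕ) with hU
  set V : Matrix (Fin (m+1)) (Fin B) ℝ := fun i b =>
    ∑ j ∈ Finset.range (m+1),
      if (i : ℕ) ≤ j then p.coeff j * (j.choose i) * (c * (b : ℝ)) ^ (j - (i : ℕ)) else 0
    with hV
  have hMUV : M = U * V := by
    ext a b
    rw [hM, Matrix.mul_apply, Polynomial.eval_eq_sum_range' (Nat.lt_succ_of_le hm)]
    have hR : ∑ i : Fin (m+1), U a i * V i b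
        = ∑ i ∈ Finset.range (m+1), (a : ℝ) ^ i *
          ∑ j ∈ Finset.range (m+1),
            (if i ≤ j then p.coeff j * (j.choose i) * (c * (b : ℝ)) ^ (j - i) else 0) := by
      simp only [hU, hV]
      exact Fin.sum_univ_eq_sum_range (fun i => (a : ℝ) ^ i *
        ∑ j ∈ Finset.range (m+1),
          if i ≤ j then p.coeff j * (j.choose i) * (c * (b : ℝ)) ^ (j - i) else 0) (m+1)
    rw [hR]
    simp only [Finset.mul_sum]
    rw [Finset.sum_comm]
    refine Finset.sum_congr rfl fun j hj => ?_
    rw [Finset.mem_range, Nat.lt_succ_iff] at hj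
    rw [add_pow, Finset.mul_sum,
      ← Finset.sum_subset (Finset.range_subset_range.mpr (Nat.succ_le_succ hj))
        (by intro i _ hi; rw [Finset.mem_range, Nat.lt_succ_iff, not_le] at hi
            rw [if_neg (by omega)]; ring)]
    refine Finset.sum_congr rfl fun i hi => ?_
    rw [Finset.mem_range, Nat.lt_succ_iff] at hi
    rw [if_pos hi]
    ring
  calc M.rank = (U * V).rank := by rw [hMUV]
    _ ≤ U.rank := Matrix.rank_mul_le_left U V
    _ ≤ Fintype.card (Fin (m+1)) := U.rank_le_card_width
    _ = m + 1 := Fintype.card_fin _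
end
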